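/- (dSAGA convergence, Lemma 1) Assume each local objective is f_k(w) = (1/2)(w - w_k*)^T H_k(w - w_k*) with H_k positive definite, the synchronization rule is w_k^{t,0} = (1/K) Σ_l w_l^{t-1,∞}, the inner fixed-point relation g_k(w_k^{t,∞}) = g_k(w_k^{t,0}) - (1/K) Σ_l g_l(w_l^{t-1,∞}) holds (where g_k(w) = H_k(w - w_k*)), and max_{k,l} ‖I - H_k^{-1}H_l‖ ≤ ρ < 1. Then for all t, max_k ‖w_k^{t,∞} - w*‖ ≤ ((1 - 1/K) ρ)^t · max_l ‖w_l^{0,∞} - w*‖, where w* is the minimizer of f = (1/K) Σ_k f_k. -/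

import Mathlib

open Matrix Finset
open scoped Matrix.Norms.L2Operator RealInnerProductSpace

lemma tel_norm {n : ℕ} (M : Matrix (Fin n) (Fin n) ℝ) (v : EuclideanSpace ℝ (Fin n)) :
    ‖Matrix.toEuclideanLin M v‖ ≤ ‖M‖ * ‖v‖ := by
  rw [Matrix.l2_opNorm_def]
  exact ((Matrix.toEuclideanLin.trans LinearMap.toContinuousLinearMap) M).le_opNorm v

lemma tel_mul {n : ℕ} (M N : Matrix (Fin n) (Fin n) ℝ) (v : EuclideanSpace ℝ (Fin n)) :
    Matrix.toEuclideanLin (M * N) v = Matrix.toEuclideanLin M (Matrix.toEuclideanLin N v) := by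
  simp [Matrix.toEuclideanLin_apply, Matrix.mulVec_mulVec]

lemma tel_one {n : ℕ} (v : EuclideanSpace ℝ (Fin n)) :
    Matrix.toEuclideanLin (1 : Matrix (Fin n) (Fin n) ℝ) v = v := by
  simp [Matrix.toEuclideanLin_apply, Matrix.one_mulVec]

lemma quad_aux (a b : ℝ) (h : ∀ ε : ℝ, 0 ≤ ε * a + ε ^ 2 * b) : a = 0 := by
  by_contra ha
  have h1 := h 1
  have h2 := h (-1)
  have hb : 0 < b := by
    rcases lt_or_gt_of_ne ha with hlt | hgt
    · nlinarith
    · nlinarith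
  have h3 := h (-(a / (2 * b)))
  have ha2 : 0 < a ^ 2 := by positivity
  have heq : -(a / (2 * b)) * a + (-(a / (2 * b))) ^ 2 * b = -(a ^ 2) / (4 * b) := by
    field_simp; ring
  rw [heq] at h3
  have : -(a ^ 2) / (4 * b) < 0 := div_neg_of_neg_of_pos (by linarith) (by linarith)
  linarith

set_option maxHeartbeats 1000000 in
/-- dSAGA convergence (Lemma 1): quadratic local losses `f_k(w) = ½(w-w_k*)ᵀH_k(w-w_k*)` with
`H_k` positive definite, synchronization `w_k^{t,0} = (1/K) Σ_l w_l^{t-1,∞}`, inner fixed-point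
relation `g_k(w_k^{t,∞}) = g_k(w_k^{t,0}) - (1/K) Σ_l g_l(w_l^{t-1,∞})`, and
`max_{k,l} ‖I - H_k⁻¹H_l‖ ≤ ρ < 1` imply geometric convergence of `max_k ‖w_k^{t,∞} - w*‖`. -/
theorem dsaga_convergence (d K : ℕ) (hK : 0 < K)
    (H : Fin K → Matrix (Fin d) (Fin d) ℝ) (hH : ∀ k, (H k).PosDef)
    (wopt : Fin K → EuclideanSpace ℝ (Fin d))
    (g : Fin K → EuclideanSpace ℝ (Fin d) → EuclideanSpace ℝ (Fin d))
    (hg : ∀ k v, g k v = (Matrix.toEuclideanLin (H k)) (v - wopt k))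
    (wstar : EuclideanSpace ℝ (Fin d))
    (hmin : ∀ w : EuclideanSpace ℝ (Fin d),
      (1 / (K : ℝ)) * ∑ k, (1 / 2) * inner ℝ (wstar - wopt k) (g k wstar) ≤
      (1 / (K : ℝ)) * ∑ k, (1 / 2) * (inner ℝ (w - wopt k) (g k w) : ℝ))
    (w : ℕ → Fin K → EuclideanSpace ℝ (Fin d))
    (hfix : ∀ t k,
      g k (w (t + 1) k) =
        g k ((1 / (K : ℝ)) • ∑ l, w t l) - (1 / (K : ℝ)) • ∑ l, g l (w t l))
    (ρ : ℝ) (hρ1 : ρ < 1) (hρ : ∀ k l, ‖(1 : Matrix (Fin d) (Fin d) ℝ) - (H k)⁻¹ * H l‖ ≤ ρ) :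
    ∀ t : ℕ, (⨆ k, ‖w t k - wstar‖) ≤
      ((1 - 1 / (K : ℝ)) * ρ) ^ t * ⨆ l, ‖w 0 l - wstar‖ := by
  classical
  haveI : Nonempty (Fin K) := ⟨⟨0, hK⟩⟩
  have hKpos : (0 : ℝ) < K := by exact_mod_cast hK
  have hsym : ∀ k, (Matrix.toEuclideanLin (H k)).IsSymmetric := fun k =>
    Matrix.isHermitian_iff_isSymmetric.mp (hH k).1
  -- Step 1: first-order optimality
  have hG0 : ∑ l, Matrix.toEuclideanLin (H l) (wstar - wopt l) = 0 := by
    set Gv : EuclideanSpace ℝ (Fin d) :=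
      ∑ l, Matrix.toEuclideanLin (H l) (wstar - wopt l) with hGv
    have key : ∀ ε : ℝ, 0 ≤ ε * ⟪Gv, Gv⟫ +
        ε ^ 2 * ∑ k, (1/2 : ℝ) * ⟪Gv, Matrix.toEuclideanLin (H k) Gv⟫ := by
      intro ε
      have h := hmin (wstar + ε • Gv)
      simp only [hg] at h
      have hpos : (0 : ℝ) < 1 / K := by positivity
      have h' : 0 ≤ ∑ k, ((1/2 : ℝ) *
            ⟪(wstar + ε • Gv) - wopt k, Matrix.toEuclideanLin (H k) ((wstar + ε • Gv) - wopt k)⟫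
          - (1/2 : ℝ) * ⟪wstar - wopt k, Matrix.toEuclideanLin (H k) (wstar - wopt k)⟫) := by
        have hs := sub_nonneg.mpr h
        rw [← mul_sub, ← Finset.sum_sub_distrib] at hs
        exact le_of_mul_le_mul_left (by simpa using hs) hpos
      have hc : ∀ k, ((1/2 : ℝ) *
            ⟪(wstar + ε • Gv) - wopt k, Matrix.toEuclideanLin (H k) ((wstar + ε • Gv) - wopt k)⟫
          - (1/2 : ℝ) * ⟪wstar - wopt k, Matrix.toEuclideanLin (H k) (wstar - wopt k)⟫)
          = ε * ⟪Gv, Matrix.toEuclideanLin (H k) (wstar - wopt k)⟫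
            + ε ^ 2 * ((1/2 : ℝ) * ⟪Gv, Matrix.toEuclideanLin (H k) Gv⟫) := by
        intro k
        have h1 : (wstar + ε • Gv) - wopt k = (wstar - wopt k) + ε • Gv := by abel
        have hswap : ⟪wstar - wopt k, Matrix.toEuclideanLin (H k) Gv⟫
            = ⟪Gv, Matrix.toEuclideanLin (H k) (wstar - wopt k)⟫ := by
          rw [real_inner_comm]
          exact hsym k Gv (wstar - wopt k)
        rw [h1, map_add, LinearMap.map_smul]
        simp only [inner_add_left, inner_add_right, real_inner_smul_left, real_inner_smul_right]
        rw [hswap]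
        ring
      rw [Finset.sum_congr rfl (fun k _ => hc k), Finset.sum_add_distrib,
        ← Finset.mul_sum, ← Finset.mul_sum, ← inner_sum, ← hGv] at h'
      exact h'
    have hzero : ⟪Gv, Gv⟫ = 0 := quad_aux _ _ key
    exact inner_self_eq_zero.mp hzero
  -- matrix inverse facts
  have hinv : ∀ k, (H k)⁻¹ * H k = 1 := fun k =>
    Matrix.nonsing_inv_mul _ (isUnit_iff_ne_zero.mpr (hH k).det_pos.ne')
  have hBA : ∀ k (x : EuclideanSpace ℝ (Fin d)),
      Matrix.toEuclideanLin ((H k)⁻¹) (Matrix.toEuclideanLin (H k) x) = x := by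
    intro k x
    rw [← tel_mul, hinv k, tel_one]
  -- averaging identity
  have havg : ∀ t, ((1/(K:ℝ)) • ∑ l, w t l) - wstar = (1/(K:ℝ)) • ∑ l, (w t l - wstar) := by
    intro t
    rw [Finset.sum_sub_distrib, smul_sub]
    congr 1
    rw [Finset.sum_const, card_univ, Fintype.card_fin, ← Nat.cast_smul_eq_nsmul ℝ,
      smul_smul, one_div_mul_cancel hKpos.ne', one_smul]
  -- Step 2: error recurrence
  have hrec : ∀ t k, w (t+1) k - wstar
      = (1/(K:ℝ)) • ∑ l, Matrix.toEuclideanLin (1 - (H k)⁻¹ * H l) (w t l - wstar) := by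
    intro t k
    have hf := hfix t k
    simp only [hg] at hf
    have harg1 : w (t+1) k - wopt k = (w (t+1) k - wstar) + (wstar - wopt k) := by abel
    have harg2 : ((1/(K:ℝ)) • ∑ l, w t l) - wopt k
        = ((1/(K:ℝ)) • ∑ l, (w t l - wstar)) + (wstar - wopt k) := by
      rw [← havg t]; abel
    have harg3 : ∀ l, w t l - wopt l = (w t l - wstar) + (wstar - wopt l) := by
      intro l; abel
    rw [harg1, harg2] at hf
    simp only [harg3, map_add] at hf
    rw [Finset.sum_add_distrib, hG0, add_zero] at hf
    have hf2 : Matrix.toEuclideanLin (H k) (w (t+1) k - wstar)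
        = Matrix.toEuclideanLin (H k) ((1/(K:ℝ)) • ∑ l, (w t l - wstar))
          - (1/(K:ℝ)) • ∑ l, Matrix.toEuclideanLin (H l) (w t l - wstar) := by
      have h4 : Matrix.toEuclideanLin (H k) ((1/(K:ℝ)) • ∑ l, (w t l - wstar))
            + Matrix.toEuclideanLin (H k) (wstar - wopt k)
            - (1/(K:ℝ)) • ∑ l, Matrix.toEuclideanLin (H l) (w t l - wstar)
          = (Matrix.toEuclideanLin (H k) ((1/(K:ℝ)) • ∑ l, (w t l - wstar))
            - (1/(K:ℝ)) • ∑ l, Matrix.toEuclideanLin (H l) (w t l - wstar))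
            + Matrix.toEuclideanLin (H k) (wstar - wopt k) := by abel
      rw [h4] at hf
      exact add_right_cancel hf
    have hAB : ∀ x, Matrix.toEuclideanLin (H k) (Matrix.toEuclideanLin ((H k)⁻¹) x) = x := by
      intro x
      rw [← tel_mul, Matrix.mul_nonsing_inv _ (isUnit_iff_ne_zero.mpr (hH k).det_pos.ne'), tel_one]
    have hinj : Function.Injective ⇑(Matrix.toEuclideanLin (H k)) := by
      intro x y hxy
      rw [← hBA k x, hxy, hBA k]
    apply hinj
    have hterm : ∀ l, Matrix.toEuclideanLin (H k)
          (Matrix.toEuclideanLin (1 - (H k)⁻¹ * H l) (w t l - wstar))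
        = Matrix.toEuclideanLin (H k) (w t l - wstar)
          - Matrix.toEuclideanLin (H l) (w t l - wstar) := by
      intro l
      have h6 : Matrix.toEuclideanLin (1 - (H k)⁻¹ * H l) (w t l - wstar)
          = (w t l - wstar)
            - Matrix.toEuclideanLin ((H k)⁻¹) (Matrix.toEuclideanLin (H l) (w t l - wstar)) := by
        have h7 : Matrix.toEuclideanLin (1 - (H k)⁻¹ * H l)
            = Matrix.toEuclideanLin (1 : Matrix (Fin d) (Fin d) ℝ)
              - Matrix.toEuclideanLin ((H k)⁻¹ * H l) := map_sub _ _ _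
        rw [h7, LinearMap.sub_apply, tel_one, tel_mul]
      rw [h6, map_sub, hAB]
    calc Matrix.toEuclideanLin (H k) (w (t+1) k - wstar)
        = Matrix.toEuclideanLin (H k) ((1/(K:ℝ)) • ∑ l, (w t l - wstar))
          - (1/(K:ℝ)) • ∑ l, Matrix.toEuclideanLin (H l) (w t l - wstar) := hf2
      _ = (1/(K:ℝ)) • ∑ l, (Matrix.toEuclideanLin (H k) (w t l - wstar)
          - Matrix.toEuclideanLin (H l) (w t l - wstar)) := by
          rw [LinearMap.map_smul, map_sum, ← smul_sub, ← Finset.sum_sub_distrib]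
      _ = Matrix.toEuclideanLin (H k)
          ((1/(K:ℝ)) • ∑ l, Matrix.toEuclideanLin (1 - (H k)⁻¹ * H l) (w t l - wstar)) := by
          rw [LinearMap.map_smul, map_sum]
          congr 1
          exact (Finset.sum_congr rfl fun l _ => hterm l).symm
  -- nonnegativity facts
  have hρ0 : (0 : ℝ) ≤ ρ := le_trans (norm_nonneg _) (hρ ⟨0, hK⟩ ⟨0, hK⟩)
  have hc0 : (0 : ℝ) ≤ (1 - 1/(K:ℝ)) * ρ := by
    apply mul_nonneg _ hρ0
    have h1 : (1:ℝ) ≤ K := by exact_mod_cast hK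
    have h2 : 1/(K:ℝ) ≤ 1 := by rw [div_le_one hKpos]; exact h1
    linarith
  -- Step 3: contraction
  have hstep : ∀ t, (⨆ k, ‖w (t+1) k - wstar‖) ≤
      ((1 - 1/(K:ℝ)) * ρ) * ⨆ l, ‖w t l - wstar‖ := by
    intro t
    have hMle : ∀ l, ‖w t l - wstar‖ ≤ ⨆ l, ‖w t l - wstar‖ := fun l =>
      le_ciSup (f := fun l => ‖w t l - wstar‖) (Set.Finite.bddAbove (Set.finite_range _)) l
    set M := ⨆ l, ‖w t l - wstar‖ with hM
    have hM0 : 0 ≤ M := le_trans (norm_nonneg _) (hMle ⟨0, hK⟩)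
    apply ciSup_le
    intro k
    rw [hrec t k, norm_smul]
    have hn1 : ‖(1/(K:ℝ))‖ = 1/(K:ℝ) := Real.norm_of_nonneg (by positivity)
    rw [hn1]
    have hbound : ‖∑ l, Matrix.toEuclideanLin (1 - (H k)⁻¹ * H l) (w t l - wstar)‖
        ≤ ((K:ℝ) - 1) * (ρ * M) := by
      calc ‖∑ l, Matrix.toEuclideanLin (1 - (H k)⁻¹ * H l) (w t l - wstar)‖
          ≤ ∑ l, ‖Matrix.toEuclideanLin (1 - (H k)⁻¹ * H l) (w t l - wstar)‖ :=
            norm_sum_le _ _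
        _ = ‖Matrix.toEuclideanLin (1 - (H k)⁻¹ * H k) (w t k - wstar)‖
            + ∑ l ∈ univ.erase k, ‖Matrix.toEuclideanLin (1 - (H k)⁻¹ * H l) (w t l - wstar)‖ :=
            (Finset.add_sum_erase _ _ (mem_univ k)).symm
        _ = ∑ l ∈ univ.erase k, ‖Matrix.toEuclideanLin (1 - (H k)⁻¹ * H l) (w t l - wstar)‖ := by
            rw [hinv k, sub_self, map_zero, LinearMap.zero_apply, norm_zero, zero_add]
        _ ≤ ∑ _l ∈ univ.erase k, ρ * M := by
            apply Finset.sum_le_sum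
            intro l _
            calc ‖Matrix.toEuclideanLin (1 - (H k)⁻¹ * H l) (w t l - wstar)‖
                ≤ ‖(1 : Matrix (Fin d) (Fin d) ℝ) - (H k)⁻¹ * H l‖ * ‖w t l - wstar‖ :=
                  tel_norm _ _
              _ ≤ ρ * M := mul_le_mul (hρ k l) (hMle l) (norm_nonneg _) hρ0
        _ = ((K:ℝ) - 1) * (ρ * M) := by
            rw [Finset.sum_const, Finset.card_erase_of_mem (mem_univ k), card_univ,
              Fintype.card_fin, nsmul_eq_mul]
            congr 1
            rw [Nat.cast_sub hK, Nat.cast_one]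
    calc (1/(K:ℝ)) * ‖∑ l, Matrix.toEuclideanLin (1 - (H k)⁻¹ * H l) (w t l - wstar)‖
        ≤ (1/(K:ℝ)) * (((K:ℝ) - 1) * (ρ * M)) :=
          mul_le_mul_of_nonneg_left hbound (by positivity)
      _ = ((1 - 1/(K:ℝ)) * ρ) * M := by
          field_simp
  -- Step 4: induction
  intro t
  induction t with
  | zero => rw [pow_zero, one_mul]
  | succ n ih =>
      calc (⨆ k, ‖w (n+1) k - wstar‖)
          ≤ ((1 - 1/(K:ℝ)) * ρ) * ⨆ l, ‖w n l - wstar‖ := hstep n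
        _ ≤ ((1 - 1/(K:ℝ)) * ρ) * (((1 - 1/(K:ℝ)) * ρ) ^ n * ⨆ l, ‖w 0 l - wstar‖) :=
            mul_le_mul_of_nonneg_left ih hc0
        _ = ((1 - 1/(K:ℝ)) * ρ) ^ (n+1) * ⨆ l, ‖w 0 l - wstar‖ := by ring
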